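/- In the Bayesian model with p ≥ 3, the statistic ((p−2)/(n+2))·S²/‖X−ν‖² satisfies E[((p−2)/(n+2))·S²/‖X−ν‖²] = (σ²/(τ²+σ²))·(n/(n+2)), where the expectation is the iterated integral over θ ~ N_p(ν, τ²I_p), X ~ N_p(θ, σ²I_p) and S² = σ²U, U ~ χ²_n. In particular this statistic is an asymptotically unbiased estimator of σ²/(τ²+σ²) as n → ∞. -/

import Mathlib

open MeasureTheory ProbabilityTheory Filter

/-- The chi-square distribution with `m` degrees of freedom: the Gamma distribution
with shape `m/2` and rate `1/2`. -/
noncomputable def chiSq (m : ℕ) : Measure ℝ := gammaMeasure ((m : ℝ) / 2) (1 / 2)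

/-- Expectation of `f` under the chi-square distribution with `m` degrees of freedom. -/
noncomputable def chiSqExp (m : ℕ) (f : ℝ → ℝ) : ℝ := ∫ u, f u ∂(chiSq m)

/-- `N_p(θ, v I_p)`: the measure on `ℝ^p` under which the coordinates are independent
Gaussians, coordinate `i` having mean `θ i` and variance `v`. -/
noncomputable def normalPi (p : ℕ) (θ : Fin p → ℝ) (v : ℝ) : Measure (Fin p → ℝ) :=
  Measure.pi fun i => gaussianReal (θ i) v.toNNReal

/-- Bayes risk of an estimator `δ(X, S²)` in the model
`θ ~ N_p(ν, τ²I_p)`, `X | θ ~ N_p(θ, σ²I_p)`, `S² = σ²U` with `U ~ χ²_n`,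
as the iterated integral `E_θ E_{S²} E_{X|θ} ‖δ(X,S²) − θ‖²`
(the squared Euclidean norm being the sum of squared coordinates). -/
noncomputable def bayesRisk (p n : ℕ) (ν : Fin p → ℝ) (τ2 σ2 : ℝ)
    (δ : (Fin p → ℝ) → ℝ → Fin p → ℝ) : ℝ :=
  ∫ θ, ∫ u, ∫ x, (∑ i, (δ x (σ2 * u) i - θ i) ^ 2) ∂(normalPi p θ σ2)
    ∂(chiSq n) ∂(normalPi p ν τ2)

/-- The Modified Bayes estimator `δ*_B(X,S²) = (1 − S²/(S²+nτ²))(X−ν) + ν`. -/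
noncomputable def modBayes (p n : ℕ) (ν : Fin p → ℝ) (τ2 : ℝ) :
    (Fin p → ℝ) → ℝ → Fin p → ℝ :=
  fun x s2 i => (1 - s2 / (s2 + n * τ2)) * (x i - ν i) + ν i

/-- The general shrinkage estimator `δ*c(X,S²) = (1 − c·S²/‖X−ν‖²)(X−ν) + ν`. -/
noncomputable def shrinkEst (p : ℕ) (ν : Fin p → ℝ) (c : ℝ) :
    (Fin p → ℝ) → ℝ → Fin p → ℝ :=
  fun x s2 i => (1 - c * s2 / (∑ j, (x j - ν j) ^ 2)) * (x i - ν i) + ν i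

/-- The Empirical Modified Bayes estimator
`δ*_EB(X,S²) = (1 − ((p−2)/(n+2))·S²/‖X−ν‖²)(X−ν) + ν`. -/
noncomputable def empModBayes (p n : ℕ) (ν : Fin p → ℝ) :
    (Fin p → ℝ) → ℝ → Fin p → ℝ :=
  shrinkEst p ν (((p : ℝ) - 2) / ((n : ℝ) + 2))


open Set
open scoped ENNReal NNReal Real

instance normalPi.instIsProbabilityMeasure (p : ℕ) (θ : Fin p → ℝ) (v : ℝ) :
    IsProbabilityMeasure (normalPi p θ v) := by
  unfold normalPi; infer_instance

lemma aux_pos {t v : ℝ} (ht : 0 ≤ t) (hv : 0 < v) : 0 < 1 + 2 * t * v := by nlinarith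

lemma gauss_exp {v : ℝ} (hv : 0 < v) {t : ℝ} (ht : 0 ≤ t) (b : ℝ) :
    ∫ y, Real.exp (-(t * (y + b) ^ 2)) ∂(gaussianReal 0 v.toNNReal)
      = (Real.sqrt (1 + 2 * t * v))⁻¹ * Real.exp (-(t * b ^ 2 / (1 + 2 * t * v))) := by
  have hvn : v.toNNReal ≠ 0 := by
    simp only [ne_eq, Real.toNNReal_eq_zero, not_le]; exact hv
  have hvv : ((v.toNNReal : ℝ)) = v := Real.coe_toNNReal v hv.le
  have h1 : (0:ℝ) < 1 + 2 * t * v := aux_pos ht hv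
  set A : ℝ := t + (2 * v)⁻¹ with hA
  have hApos : 0 < A := by positivity
  rw [gaussianReal_of_var_ne_zero _ hvn]
  have hpdf : gaussianPDF 0 v.toNNReal
      = fun x => ((Real.toNNReal (gaussianPDFReal 0 v.toNNReal x) : ℝ≥0∞)) := rfl
  rw [hpdf, integral_withDensity_eq_integral_smul
    ((measurable_gaussianPDFReal 0 v.toNNReal).real_toNNReal)]
  have hpt : ∀ x : ℝ,
      (Real.toNNReal (gaussianPDFReal 0 v.toNNReal x)) • Real.exp (-(t * (x + b) ^ 2))
      = (Real.sqrt (2 * Real.pi * v))⁻¹ *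
          (Real.exp (-(t * b ^ 2 / (1 + 2 * t * v))) * Real.exp (-(A * (x + t * b / A) ^ 2))) := by
    intro x
    rw [NNReal.smul_def, Real.coe_toNNReal _ (gaussianPDFReal_nonneg _ _ _), smul_eq_mul]
    unfold gaussianPDFReal
    rw [hvv, sub_zero, mul_assoc, ← Real.exp_add, ← Real.exp_add]
    congr 2
    rw [hA]
    field_simp
    ring
  simp_rw [hpt]
  rw [integral_const_mul, integral_const_mul,
    integral_add_right_eq_self (fun x => Real.exp (-(A * x ^ 2))) (t * b / A)]
  simp_rw [← neg_mul]
  rw [integral_gaussian]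
  have hc : (Real.sqrt (2 * Real.pi * v))⁻¹ * Real.sqrt (Real.pi / A)
      = (Real.sqrt (1 + 2 * t * v))⁻¹ := by
    rw [← Real.sqrt_inv, ← Real.sqrt_mul (by positivity), ← Real.sqrt_inv]
    congr 1
    rw [hA]
    field_simp
    ring
  calc (Real.sqrt (2 * Real.pi * v))⁻¹ *
        (Real.exp (-(t * b ^ 2 / (1 + 2 * t * v))) * Real.sqrt (Real.pi / A))
      = ((Real.sqrt (2 * Real.pi * v))⁻¹ * Real.sqrt (Real.pi / A)) *
          Real.exp (-(t * b ^ 2 / (1 + 2 * t * v))) := by ring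
    _ = _ := by rw [hc]

lemma gauss_exp_lint {v : ℝ} (hv : 0 < v) {t : ℝ} (ht : 0 ≤ t) (b : ℝ) :
    ∫⁻ y, ENNReal.ofReal (Real.exp (-(t * (y + b) ^ 2))) ∂(gaussianReal 0 v.toNNReal)
      = ENNReal.ofReal ((Real.sqrt (1 + 2 * t * v))⁻¹
          * Real.exp (-(t * b ^ 2 / (1 + 2 * t * v)))) := by
  rw [← ofReal_integral_eq_lintegral_ofReal ?_ (ae_of_all _ fun x => (Real.exp_nonneg _)),
    gauss_exp hv ht b]
  refine Integrable.mono' (integrable_const 1) (Measurable.aestronglyMeasurable (by fun_prop))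
    (ae_of_all _ fun x => ?_)
  rw [Real.norm_eq_abs, abs_of_nonneg (Real.exp_nonneg _)]
  exact Real.exp_le_one_iff.mpr (by nlinarith [sq_nonneg (x + b)])

lemma lintegral_pi_prod {p : ℕ} (μ : Fin p → Measure ℝ) [∀ i, IsProbabilityMeasure (μ i)]
    {f : Fin p → ℝ → ℝ≥0∞} (hf : ∀ i, Measurable (f i)) :
    ∫⁻ x, ∏ i, f i (x i) ∂Measure.pi μ = ∏ i, ∫⁻ x, f i x ∂μ i := by
  induction p with
  | zero =>
      rw [Measure.pi_of_empty]
      simp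
  | succ n ih =>
      have hmeas : Measurable fun q : ℝ × (Fin n → ℝ) =>
          f 0 q.1 * ∏ j, f ((0 : Fin (n+1)).succAbove j) (q.2 j) :=
        ((hf 0).comp measurable_fst).mul <| Finset.measurable_prod _ fun j _ =>
          (hf _).comp ((measurable_pi_apply j).comp measurable_snd)
      calc ∫⁻ x, ∏ i, f i (x i) ∂Measure.pi μ
          = ∫⁻ x, (fun q : ℝ × (Fin n → ℝ) =>
              f 0 q.1 * ∏ j, f ((0 : Fin (n+1)).succAbove j) (q.2 j))
              (MeasurableEquiv.piFinSuccAbove (fun _ => ℝ) 0 x) ∂Measure.pi μ := by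
            congr 1 with x
            simp [MeasurableEquiv.piFinSuccAbove, Fin.prod_univ_succ, Fin.succAbove_zero, Fin.tail]
        _ = ∫⁻ q, f 0 q.1 * ∏ j, f ((0 : Fin (n+1)).succAbove j) (q.2 j)
              ∂((μ 0).prod (Measure.pi fun j => μ ((0 : Fin (n+1)).succAbove j))) :=
            (measurePreserving_piFinSuccAbove μ 0).lintegral_comp hmeas
        _ = (∫⁻ x, f 0 x ∂μ 0) * ∫⁻ y, ∏ j, f ((0 : Fin (n+1)).succAbove j) (y j)
              ∂(Measure.pi fun j => μ ((0 : Fin (n+1)).succAbove j)) := by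
            exact lintegral_prod_mul (hf 0).aemeasurable
              (Finset.measurable_prod _ fun j _ =>
                (hf _).comp (measurable_pi_apply j)).aemeasurable
        _ = ∏ i, ∫⁻ x, f i x ∂μ i := by
            rw [ih _ (fun j => hf _), Fin.prod_univ_succ]
            simp [Fin.succAbove_zero]

lemma gauss_exp_pi {p : ℕ} {v : ℝ} (hv : 0 < v) {t : ℝ} (ht : 0 ≤ t) (z : Fin p → ℝ) :
    ∫⁻ y, ENNReal.ofReal (Real.exp (-(t * ∑ j, (y j + z j) ^ 2))) ∂(normalPi p 0 v)
      = ENNReal.ofReal (((Real.sqrt (1 + 2 * t * v))⁻¹) ^ p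
          * Real.exp (-(t / (1 + 2 * t * v) * ∑ j, (z j) ^ 2))) := by
  have h1 : (0:ℝ) < 1 + 2 * t * v := aux_pos ht hv
  have hrw : ∀ y : Fin p → ℝ, ENNReal.ofReal (Real.exp (-(t * ∑ j, (y j + z j) ^ 2)))
      = ∏ j, ENNReal.ofReal (Real.exp (-(t * (y j + z j) ^ 2))) := by
    intro y
    rw [← ENNReal.ofReal_prod_of_nonneg (fun i _ => Real.exp_nonneg _), ← Real.exp_sum]
    congr 2
    rw [Finset.mul_sum, ← Finset.sum_neg_distrib]
  simp_rw [hrw]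
  unfold normalPi
  rw [lintegral_pi_prod (fun i => gaussianReal ((0 : Fin p → ℝ) i) v.toNNReal)
    (f := fun j w => ENNReal.ofReal (Real.exp (-(t * (w + z j) ^ 2))))
    (fun i => by fun_prop)]
  have hz : ∀ i : Fin p, ((0 : Fin p → ℝ) i) = (0:ℝ) := fun i => rfl
  simp_rw [hz, gauss_exp_lint hv ht]
  rw [← ENNReal.ofReal_prod_of_nonneg (fun i _ => by positivity)]
  congr 1
  rw [Finset.prod_mul_distrib, Finset.prod_const, Finset.card_univ, Fintype.card_fin,
    ← Real.exp_sum]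
  congr 2
  rw [Finset.mul_sum, ← Finset.sum_neg_distrib]
  exact Finset.sum_congr rfl fun j _ => by ring

lemma double_layer {p : ℕ} {σ2 τ2 : ℝ} (hσ : 0 < σ2) (hτ : 0 < τ2) {t : ℝ} (ht : 0 ≤ t) :
    ∫⁻ z, ∫⁻ y, ENNReal.ofReal (Real.exp (-(t * ∑ j, (y j + z j) ^ 2)))
        ∂(normalPi p 0 σ2) ∂(normalPi p 0 τ2)
      = ENNReal.ofReal (((Real.sqrt (1 + 2 * t * (σ2 + τ2)))⁻¹) ^ p) := by
  have h1 : (0:ℝ) < 1 + 2 * t * σ2 := aux_pos ht hσ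
  set t' : ℝ := t / (1 + 2 * t * σ2) with ht'
  have ht'0 : 0 ≤ t' := div_nonneg ht h1.le
  simp_rw [gauss_exp_pi hσ ht, ENNReal.ofReal_mul (by positivity :
    (0:ℝ) ≤ ((Real.sqrt (1 + 2 * t * σ2))⁻¹) ^ p)]
  rw [lintegral_const_mul _ (by fun_prop)]
  have hzz : (fun z : Fin p → ℝ => ENNReal.ofReal (Real.exp (-(t' * ∑ j, (z j) ^ 2))))
      = fun z => ENNReal.ofReal (Real.exp (-(t' * ∑ j, (z j + (0 : Fin p → ℝ) j) ^ 2))) := by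
    funext z; simp
  rw [show (∫⁻ z, ENNReal.ofReal (Real.exp (-(t' * ∑ j, (z j) ^ 2))) ∂(normalPi p 0 τ2))
      = ∫⁻ z, ENNReal.ofReal (Real.exp (-(t' * ∑ j, (z j + (0 : Fin p → ℝ) j) ^ 2)))
        ∂(normalPi p 0 τ2) from by rw [hzz]]
  rw [gauss_exp_pi hτ ht'0 (0 : Fin p → ℝ)]
  have hz0 : (∑ j : Fin p, ((0 : Fin p → ℝ) j) ^ 2) = 0 := by simp
  rw [hz0, ← ENNReal.ofReal_mul (by positivity)]
  congr 1
  rw [mul_zero, neg_zero, Real.exp_zero, mul_one, ← mul_pow]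
  congr 1
  rw [← mul_inv, ← Real.sqrt_mul (by positivity)]
  congr 1
  rw [ht']
  field_simp
  ring

lemma exp_lintegral {q : ℝ} (hq : 0 < q) :
    ∫⁻ t in Ioi (0:ℝ), ENNReal.ofReal (Real.exp (-(t * q))) = ENNReal.ofReal q⁻¹ := by
  have hInt : IntegrableOn (fun t : ℝ => Real.exp (-(t * q))) (Ioi 0) := by
    have h := exp_neg_integrableOn_Ioi 0 hq
    refine h.congr_fun (fun x _ => by ring_nf) measurableSet_Ioi
  rw [← ofReal_integral_eq_lintegral_ofReal hInt (ae_of_all _ fun t => Real.exp_nonneg _)]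
  congr 1
  calc ∫ t in Ioi (0:ℝ), Real.exp (-(t * q)) = ∫ t in Ioi (0:ℝ), Real.exp (-(q * t)) := by
        simp_rw [mul_comm]
    _ = q⁻¹ • ∫ x in Ioi (q * 0), Real.exp (-x) :=
        integral_comp_mul_left_Ioi (fun x => Real.exp (-x)) 0 hq
    _ = q⁻¹ := by rw [mul_zero, integral_exp_neg_Ioi_zero, smul_eq_mul, mul_one]

lemma integral_Ioi_shift (f : ℝ → ℝ) (a c : ℝ) :
    ∫ x in Ioi a, f (x + c) = ∫ x in Ioi (a + c), f x := by
  have hemb : MeasurableEmbedding (fun x : ℝ => x + c) :=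
    (MeasurableEquiv.addRight c).measurableEmbedding
  have hmp : MeasurePreserving (fun x : ℝ => x + c) volume volume :=
    measurePreserving_add_right volume c
  have h := hmp.setIntegral_preimage_emb hemb f (Ioi (a + c))
  rw [← h]
  congr 1
  ext x
  simp

lemma sqrt_inv_pow {s : ℝ} (hs : 0 < s) (p : ℕ) :
    ((Real.sqrt s)⁻¹) ^ p = s ^ (-(p : ℝ) / 2) := by
  have h : (Real.sqrt s)⁻¹ = s ^ (-(1/2 : ℝ)) := by
    rw [Real.rpow_neg hs.le, Real.sqrt_eq_rpow]
  rw [h, ← Real.rpow_natCast (s ^ (-(1/2 : ℝ))) p, ← Real.rpow_mul hs.le]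
  congr 1
  ring

lemma psi_integrable {p : ℕ} (hp : 3 ≤ p) {V : ℝ} (hV : 0 < V) :
    IntegrableOn (fun t : ℝ => (1 + 2 * V * t) ^ (-(p:ℝ)/2)) (Ioi 0) := by
  set a : ℝ := -(p:ℝ)/2 with haa
  have ha : a < -1 := by
    rw [haa]
    have : (3:ℝ) ≤ p := by exact_mod_cast hp
    linarith
  have ha0 : a ≤ 0 := by linarith
  have hmeas : Measurable fun t : ℝ => (1 + 2 * V * t) ^ a := by fun_prop
  have hIoc : IntegrableOn (fun t : ℝ => (1 + 2 * V * t) ^ a) (Ioc 0 1) := by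
    refine Integrable.mono' (integrable_const 1) hmeas.aestronglyMeasurable.restrict ?_
    filter_upwards [ae_restrict_mem measurableSet_Ioc] with t ht
    have h1 : (1:ℝ) ≤ 1 + 2 * V * t := by nlinarith [ht.1]
    rw [Real.norm_eq_abs, abs_of_nonneg (Real.rpow_nonneg (by linarith) _)]
    exact Real.rpow_le_one_of_one_le_of_nonpos h1 ha0
  have hIoi : IntegrableOn (fun t : ℝ => (1 + 2 * V * t) ^ a) (Ioi 1) := by
    refine Integrable.mono' (((integrableOn_Ioi_rpow_of_lt ha one_pos)).const_mul ((2*V) ^ a))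
      hmeas.aestronglyMeasurable.restrict ?_
    filter_upwards [ae_restrict_mem measurableSet_Ioi] with t ht
    have ht1 : (1:ℝ) < t := ht
    have h0 : (0:ℝ) < 2 * V * t := by positivity
    have h1 : 2 * V * t ≤ 1 + 2 * V * t := by linarith
    rw [Real.norm_eq_abs, abs_of_nonneg (Real.rpow_nonneg (by linarith) _)]
    calc (1 + 2 * V * t) ^ a ≤ (2 * V * t) ^ a :=
          Real.rpow_le_rpow_of_nonpos h0 h1 ha0
      _ = (2 * V) ^ a * t ^ a := Real.mul_rpow (by positivity) (by linarith)
  have := hIoc.union hIoi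
  rwa [Ioc_union_Ioi_eq_Ioi zero_le_one] at this

lemma psi_integral {p : ℕ} (hp : 3 ≤ p) {V : ℝ} (hV : 0 < V) :
    ∫⁻ t in Ioi (0:ℝ), ENNReal.ofReal (((Real.sqrt (1 + 2 * t * V))⁻¹) ^ p)
      = ENNReal.ofReal (((p:ℝ) - 2)⁻¹ * V⁻¹) := by
  set a : ℝ := -(p:ℝ)/2 with haa
  have hp3 : (3:ℝ) ≤ p := by exact_mod_cast hp
  have ha : a < -1 := by rw [haa]; linarith
  have hcongr : ∀ t ∈ Ioi (0:ℝ), ENNReal.ofReal (((Real.sqrt (1 + 2 * t * V))⁻¹) ^ p)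
      = ENNReal.ofReal ((1 + 2 * V * t) ^ a) := by
    intro t ht
    have h1 : (0:ℝ) < 1 + 2 * t * V := by nlinarith [le_of_lt (mem_Ioi.mp ht)]
    rw [sqrt_inv_pow h1, show 1 + 2 * t * V = 1 + 2 * V * t from by ring]
  rw [setLIntegral_congr_fun measurableSet_Ioi hcongr]
  have hnn : 0 ≤ᵐ[volume.restrict (Ioi (0:ℝ))] fun t => (1 + 2 * V * t) ^ a := by
    filter_upwards [ae_restrict_mem measurableSet_Ioi] with t ht
    exact Real.rpow_nonneg (by nlinarith [mem_Ioi.mp ht]) _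
  rw [← ofReal_integral_eq_lintegral_ofReal (psi_integrable hp hV) hnn]
  · congr 1
    have h2V : (0:ℝ) < 2 * V := by positivity
    calc ∫ t in Ioi (0:ℝ), (1 + 2 * V * t) ^ a
        = ∫ t in Ioi (0:ℝ), (fun x : ℝ => (1 + x) ^ a) (2 * V * t) := by norm_num
      _ = (2*V)⁻¹ • ∫ x in Ioi (2 * V * 0), (1 + x) ^ a :=
          integral_comp_mul_left_Ioi (fun x : ℝ => (1 + x) ^ a) 0 h2V
      _ = (2*V)⁻¹ * ∫ x in Ioi (0:ℝ), (fun u : ℝ => u ^ a) (x + 1) := by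
          rw [mul_zero, smul_eq_mul]
          congr 1
          refine setIntegral_congr_fun measurableSet_Ioi (fun x _ => by rw [add_comm])
      _ = (2*V)⁻¹ * ∫ u in Ioi (0 + 1 : ℝ), u ^ a :=
          by rw [integral_Ioi_shift (fun u : ℝ => u ^ a) 0 1]
      _ = ((p:ℝ) - 2)⁻¹ * V⁻¹ := by
          rw [zero_add, integral_Ioi_rpow_of_lt ha one_pos, Real.one_rpow, haa]
          have hne : (p:ℝ) - 2 ≠ 0 := by linarith
          have hne2 : -(p:ℝ)/2 + 1 ≠ 0 := by
            intro h; apply hne; linarith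
          have hdiv : (-1 : ℝ) / (-(p:ℝ)/2 + 1) = 2 / ((p:ℝ) - 2) := by
            rw [div_eq_div_iff hne2 hne]; ring
          rw [hdiv]
          field_simp

lemma normalPi_null_singleton {p : ℕ} {v : ℝ} (hv : 0 < v) (hp : 0 < p) (c : Fin p → ℝ) :
    (normalPi p 0 v) {c} = 0 := by
  have hvn : v.toNNReal ≠ 0 := by
    simp only [ne_eq, Real.toNNReal_eq_zero, not_le]; exact hv
  have h : ({c} : Set (Fin p → ℝ)) = Set.pi univ (fun i => {c i}) := by
    ext y
    simp [funext_iff]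
  unfold normalPi
  rw [h, Measure.pi_pi]
  refine Finset.prod_eq_zero (Finset.mem_univ (⟨0, hp⟩ : Fin p)) ?_
  exact gaussianReal_absolutelyContinuous _ hvn (measure_singleton _)

lemma core {p : ℕ} (hp : 3 ≤ p) {σ2 τ2 : ℝ} (hσ : 0 < σ2) (hτ : 0 < τ2) :
    ∫⁻ z, ∫⁻ y, ENNReal.ofReal ((∑ j, (y j + z j) ^ 2)⁻¹)
        ∂(normalPi p 0 σ2) ∂(normalPi p 0 τ2)
      = ENNReal.ofReal (((p:ℝ) - 2)⁻¹ * (σ2 + τ2)⁻¹) := by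
  have hp0 : 0 < p := by omega
  -- Step 1+2: rewrite inner integral, for every z
  have step12 : ∀ z : Fin p → ℝ,
      ∫⁻ y, ENNReal.ofReal ((∑ j, (y j + z j) ^ 2)⁻¹) ∂(normalPi p 0 σ2)
        = ∫⁻ t in Ioi (0:ℝ), ∫⁻ y, ENNReal.ofReal (Real.exp (-(t * ∑ j, (y j + z j) ^ 2)))
            ∂(normalPi p 0 σ2) := by
    intro z
    have hnull : (normalPi p 0 σ2) {y : Fin p → ℝ | ∑ j, (y j + z j) ^ 2 = 0} = 0 := by
      have hset : {y : Fin p → ℝ | ∑ j, (y j + z j) ^ 2 = 0} = {fun i => -z i} := by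
        ext y
        simp only [mem_setOf_eq, mem_singleton_iff, funext_iff]
        rw [Finset.sum_eq_zero_iff_of_nonneg (fun j _ => sq_nonneg _)]
        constructor
        · intro h i
          have := h i (Finset.mem_univ i)
          have := sq_eq_zero_iff.mp this
          linarith
        · intro h j _
          rw [h j]
          ring
      rw [hset]
      exact normalPi_null_singleton hσ hp0 _
    have hcongr : ∫⁻ y, ENNReal.ofReal ((∑ j, (y j + z j) ^ 2)⁻¹) ∂(normalPi p 0 σ2)
        = ∫⁻ y, (∫⁻ t in Ioi (0:ℝ), ENNReal.ofReal (Real.exp (-(t * ∑ j, (y j + z j) ^ 2))))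
            ∂(normalPi p 0 σ2) := by
      refine lintegral_congr_ae ?_
      filter_upwards [measure_eq_zero_iff_ae_notMem.mp hnull] with y hy
      have hq : 0 < ∑ j, (y j + z j) ^ 2 :=
        lt_of_le_of_ne (Finset.sum_nonneg fun j _ => sq_nonneg _) (Ne.symm hy)
      rw [exp_lintegral hq]
    rw [hcongr]
    exact lintegral_lintegral_swap (by fun_prop)
  simp_rw [step12]
  -- Step 3: swap z and t
  rw [lintegral_lintegral_swap ?_]
  · -- Step 4: apply double_layer for each t > 0
    have h4 : ∫⁻ t in Ioi (0:ℝ), ∫⁻ z, ∫⁻ y,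
          ENNReal.ofReal (Real.exp (-(t * ∑ j, (y j + z j) ^ 2)))
          ∂(normalPi p 0 σ2) ∂(normalPi p 0 τ2)
        = ∫⁻ t in Ioi (0:ℝ),
            ENNReal.ofReal (((Real.sqrt (1 + 2 * t * (σ2 + τ2)))⁻¹) ^ p) := by
      refine setLIntegral_congr_fun measurableSet_Ioi (fun t ht => ?_)
      exact double_layer hσ hτ (le_of_lt (mem_Ioi.mp ht))
    rw [h4, psi_integral hp (by linarith)]
  · -- AEMeasurable for swap
    refine Measurable.aemeasurable ?_
    have : Measurable fun q : ((Fin p → ℝ) × ℝ) × (Fin p → ℝ) =>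
        ENNReal.ofReal (Real.exp (-(q.1.2 * ∑ j, (q.2 j + q.1.1 j) ^ 2))) := by fun_prop
    exact this.lintegral_prod_right'

lemma chiSq_mean {n : ℕ} (hn : 1 ≤ n) : ∫ u, u ∂(chiSq n) = n := by
  have hn1 : (1:ℝ) ≤ (n:ℝ) := by exact_mod_cast hn
  set a : ℝ := (n:ℝ)/2 with haa
  have ha : 0 < a := by rw [haa]; linarith
  have hr : (0:ℝ) < 1/2 := by norm_num
  have hmeq : chiSq n = volume.withDensity (gammaPDF a (1/2)) := rfl
  rw [hmeq]
  have hpdf : gammaPDF a (1/2)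
      = fun x => ((Real.toNNReal (gammaPDFReal a (1/2) x) : ℝ≥0∞)) := rfl
  rw [hpdf, integral_withDensity_eq_integral_smul
    ((measurable_gammaPDFReal _ _).real_toNNReal)]
  have hsmul : ∀ x : ℝ, (Real.toNNReal (gammaPDFReal a (1/2) x)) • x
      = gammaPDFReal a (1/2) x * x := fun x => by
    rw [NNReal.smul_def, Real.coe_toNNReal _ (gammaPDFReal_nonneg ha hr x), smul_eq_mul]
  simp_rw [hsmul]
  rw [← setIntegral_eq_integral_of_forall_compl_eq_zero (s := Ioi (0:ℝ)) ?hcompl]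
  case hcompl =>
    intro x hx
    have hx' : x ≤ 0 := le_of_not_gt (by simpa using hx)
    rcases hx'.lt_or_eq with h | h
    · have : gammaPDFReal a (1/2) x = 0 := by
        unfold gammaPDFReal
        rw [if_neg (not_le.mpr h)]
      rw [this, zero_mul]
    · rw [h, mul_zero]
  have hcongr : ∀ x ∈ Ioi (0:ℝ), gammaPDFReal a (1/2) x * x
      = (1/2:ℝ) ^ a / Real.Gamma a * (x ^ (a + 1 - 1) * Real.exp (-(1/2 * x))) := by
    intro x hx
    have hx0 : (0:ℝ) < x := hx
    unfold gammaPDFReal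
    rw [if_pos hx0.le, show a + 1 - 1 = (a - 1) + 1 from by ring,
      Real.rpow_add_one hx0.ne']
    ring
  rw [setIntegral_congr_fun measurableSet_Ioi hcongr, integral_const_mul,
    Real.integral_rpow_mul_exp_neg_mul_Ioi (by linarith : (0:ℝ) < a + 1) hr]
  rw [Real.Gamma_add_one ha.ne', show (1:ℝ)/(1/2:ℝ) = 2 from by norm_num,
    Real.rpow_add_one (two_ne_zero) a, one_div,
    Real.inv_rpow (by norm_num : (0:ℝ) ≤ 2)]
  have hΓ : Real.Gamma a ≠ 0 := (Real.Gamma_pos_of_pos ha).ne'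
  have h2a : (2:ℝ) ^ a ≠ 0 := (Real.rpow_pos_of_pos two_pos a).ne'
  field_simp
  rw [haa]
  ring

lemma normalPi_translate {p : ℕ} (θ : Fin p → ℝ) (v : ℝ) :
    MeasurePreserving (fun y (i : Fin p) => y i + θ i) (normalPi p 0 v) (normalPi p θ v) := by
  unfold normalPi
  refine measurePreserving_pi _ _ (fun i => ⟨measurable_add_const _, ?_⟩)
  have h := gaussianReal_map_add_const (μ := (0 : Fin p → ℝ) i) (v := v.toNNReal) (θ i)
  simpa using h

lemma key (p n : ℕ) (hp : 3 ≤ p) (hn : 1 ≤ n) (ν : Fin p → ℝ) {τ2 σ2 : ℝ}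
    (hτ2 : 0 < τ2) (hσ2 : 0 < σ2) :
    (∫ θ, ∫ u, ∫ x, (((p : ℝ) - 2) / ((n : ℝ) + 2)) * (σ2 * u) / (∑ j, (x j - ν j) ^ 2)
        ∂(normalPi p θ σ2) ∂(chiSq n) ∂(normalPi p ν τ2)) =
      σ2 / (τ2 + σ2) * ((n : ℝ) / ((n : ℝ) + 2)) := by
  set c : ℝ := ((p : ℝ) - 2) / ((n : ℝ) + 2) with hc
  -- the inner-x expected value of 1/‖x-ν‖²
  set I : (Fin p → ℝ) → ℝ :=
    fun θ => ∫ x, (∑ j, (x j - ν j) ^ 2)⁻¹ ∂(normalPi p θ σ2) with hI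
  have hθ : ∀ θ : Fin p → ℝ,
      (∫ u, ∫ x, c * (σ2 * u) / (∑ j, (x j - ν j) ^ 2) ∂(normalPi p θ σ2) ∂(chiSq n))
        = (c * σ2 * (n : ℝ)) * I θ := by
    intro θ
    have hx : ∀ u : ℝ, (∫ x, c * (σ2 * u) / (∑ j, (x j - ν j) ^ 2) ∂(normalPi p θ σ2))
        = (c * σ2 * I θ) * u := by
      intro u
      simp_rw [div_eq_mul_inv]
      rw [integral_const_mul, hI]
      ring
    simp_rw [hx]
    rw [integral_const_mul, chiSq_mean hn]
    ring
  simp_rw [hθ]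
  rw [integral_const_mul]
  -- the heavy part : ∫ θ, I θ = ((p-2)(σ2+τ2))⁻¹
  have hGinner : Measurable fun q : (Fin p → ℝ) × (Fin p → ℝ) =>
      ENNReal.ofReal ((∑ j, (q.2 j + q.1 j - ν j) ^ 2)⁻¹) := by fun_prop
  set g : (Fin p → ℝ) → ℝ≥0∞ :=
    fun θ => ∫⁻ y, ENNReal.ofReal ((∑ j, (y j + θ j - ν j) ^ 2)⁻¹) ∂(normalPi p 0 σ2)
    with hg
  have hGmeas : Measurable g := by
    rw [hg]
    exact hGinner.lintegral_prod_right'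
  have hIg : ∀ θ, I θ = (g θ).toReal := by
    intro θ
    have h1 : I θ = (∫⁻ x, ENNReal.ofReal ((∑ j, (x j - ν j) ^ 2)⁻¹)
        ∂(normalPi p θ σ2)).toReal := by
      rw [hI]
      exact integral_eq_lintegral_of_nonneg_ae
        (ae_of_all _ fun x => by positivity)
        (Measurable.aestronglyMeasurable (by fun_prop))
    have h2 := (normalPi_translate θ σ2).lintegral_comp
      (f := fun x => ENNReal.ofReal ((∑ j, (x j - ν j) ^ 2)⁻¹)) (by fun_prop)
    rw [h1, ← h2, hg]
  have hgT : ∫⁻ θ, g θ ∂(normalPi p ν τ2)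
      = ENNReal.ofReal (((p:ℝ) - 2)⁻¹ * (σ2 + τ2)⁻¹) := by
    have h3 := (normalPi_translate ν τ2).lintegral_comp (f := g) hGmeas
    rw [← h3]
    have h4 : ∀ z : Fin p → ℝ, g (fun i => z i + ν i)
        = ∫⁻ y, ENNReal.ofReal ((∑ j, (y j + z j) ^ 2)⁻¹) ∂(normalPi p 0 σ2) := by
      intro z
      rw [hg]
      refine lintegral_congr fun y => ?_
      congr 2
      exact Finset.sum_congr rfl fun j _ => by ring
    simp_rw [h4]
    exact core hp hσ2 hτ2
  have hfin : ∀ᵐ θ ∂(normalPi p ν τ2), g θ < ∞ := by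
    refine ae_lt_top hGmeas ?_
    rw [hgT]
    exact ENNReal.ofReal_ne_top
  have hIint : ∫ θ, I θ ∂(normalPi p ν τ2) = ((p:ℝ) - 2)⁻¹ * (σ2 + τ2)⁻¹ := by
    calc ∫ θ, I θ ∂(normalPi p ν τ2) = ∫ θ, (g θ).toReal ∂(normalPi p ν τ2) := by
          simp_rw [hIg]
      _ = (∫⁻ θ, g θ ∂(normalPi p ν τ2)).toReal := integral_toReal hGmeas.aemeasurable hfin
      _ = ((p:ℝ) - 2)⁻¹ * (σ2 + τ2)⁻¹ := by
          rw [hgT, ENNReal.toReal_ofReal]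
          have h3 : (3:ℝ) ≤ (p:ℝ) := by exact_mod_cast hp
          exact mul_nonneg (inv_nonneg.mpr (by linarith)) (inv_nonneg.mpr (by positivity))
  rw [hIint, hc]
  have h3 : (3:ℝ) ≤ (p:ℝ) := by exact_mod_cast hp
  have hp2 : (p:ℝ) - 2 ≠ 0 := by linarith
  have hn2 : (n:ℝ) + 2 ≠ 0 := by positivity
  have hστ : σ2 + τ2 ≠ 0 := by positivity
  field_simp
  ring

theorem stmt_9 (p : ℕ) (hp : 3 ≤ p) (ν : Fin p → ℝ) (τ2 σ2 : ℝ)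
    (hτ2 : 0 < τ2) (hσ2 : 0 < σ2) :
    (∀ n : ℕ, 1 ≤ n →
      (∫ θ, ∫ u, ∫ x, (((p : ℝ) - 2) / ((n : ℝ) + 2)) * (σ2 * u) / (∑ j, (x j - ν j) ^ 2)
          ∂(normalPi p θ σ2) ∂(chiSq n) ∂(normalPi p ν τ2)) =
        σ2 / (τ2 + σ2) * ((n : ℝ) / ((n : ℝ) + 2))) ∧
    Tendsto (fun n : ℕ =>
        ∫ θ, ∫ u, ∫ x, (((p : ℝ) - 2) / ((n : ℝ) + 2)) * (σ2 * u) / (∑ j, (x j - ν j) ^ 2)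
          ∂(normalPi p θ σ2) ∂(chiSq n) ∂(normalPi p ν τ2))
      atTop (nhds (σ2 / (τ2 + σ2))) := by
  have key' : ∀ n : ℕ, 1 ≤ n →
      (∫ θ, ∫ u, ∫ x, (((p : ℝ) - 2) / ((n : ℝ) + 2)) * (σ2 * u) / (∑ j, (x j - ν j) ^ 2)
          ∂(normalPi p θ σ2) ∂(chiSq n) ∂(normalPi p ν τ2)) =
        σ2 / (τ2 + σ2) * ((n : ℝ) / ((n : ℝ) + 2)) :=
    fun n hn => key p n hp hn ν hτ2 hσ2
  refine ⟨key', ?_⟩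
  have h2 : Tendsto (fun nn : ℕ => (nn:ℝ) + 2) atTop atTop :=
    tendsto_atTop_add_const_right _ 2 tendsto_natCast_atTop_atTop
  have h3 : Tendsto (fun nn : ℕ => 2 / ((nn:ℝ) + 2)) atTop (nhds 0) :=
    tendsto_const_nhds.div_atTop h2
  have h5 : Tendsto (fun nn : ℕ => 1 - 2 / ((nn:ℝ) + 2)) atTop (nhds 1) := by
    have h := (tendsto_const_nhds (x := (1:ℝ)) (f := atTop)).sub h3
    simpa using h
  have h4 : Tendsto (fun nn : ℕ => σ2 / (τ2 + σ2) * ((nn:ℝ) / ((nn:ℝ) + 2))) atTop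
      (nhds (σ2 / (τ2 + σ2))) := by
    have h6 : (fun nn : ℕ => σ2 / (τ2 + σ2) * ((nn:ℝ) / ((nn:ℝ) + 2)))
        = fun nn : ℕ => σ2 / (τ2 + σ2) * (1 - 2 / ((nn:ℝ) + 2)) := by
      funext nn
      congr 1
      have hne : (nn:ℝ) + 2 ≠ 0 := by positivity
      field_simp
      ring
    rw [h6]
    simpa using (tendsto_const_nhds (x := σ2 / (τ2 + σ2)) (f := atTop)).mul h5
  exact Tendsto.congr'
    (by filter_upwards [eventually_ge_atTop 1] with n hn; exact (key' n hn).symm) h4
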